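/- Let V be a category with filtered colimits and coequalisers, T a λ-accessible monad on V for some regular cardinal λ, and f, g : (A,a) ⇉ (B,b) a pair of T-algebra morphisms. Then the transfinitely constructed map q_{<n} : B → Q_n is the coequaliser of f and g in the category of T-algebras, for any ordinal n with |n| ≥ λ. -/

import Mathlib

open CategoryTheory CategoryTheory.Limits Order

universe w v u

namespace Paper

/-- A category `J` is `κ`-filtered when every diagram in `J` of size `< κ` admits a cocone. -/
def IsCardFiltered (κ : Cardinal.{w}) (J : Type u) [Category.{v} J] : Prop :=
  ∀ (K : Type w) (_ : SmallCategory K) (F : K ⥤ J),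
    Cardinal.mk (Σ (a : K) (b : K), a ⟶ b) < κ → Nonempty (Limits.Cocone F)

/-- A functor preserves `κ`-filtered colimits when it preserves colimits of every small
`κ`-filtered shape. -/
def PreservesCardFilteredColimits {V : Type u} [Category.{v} V] (κ : Cardinal.{v})
    {D : Type w} [Category.{v} D] (F : V ⥤ D) : Prop :=
  ∀ (J : Type v) (_ : SmallCategory J), IsCardFiltered.{v} κ J →
    Nonempty (PreservesColimitsOfShape J F)

section Aux

variable {V : Type u} [Category.{v} V] (T : Monad V)
variable (Q : Ordinal.{v} → V)
variable (qle : ∀ m m' : Ordinal.{v}, m ≤ m' → (Q m ⟶ Q m'))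
variable (vs : ∀ m : Ordinal.{v}, T.obj (Q m) ⟶ Q (Order.succ m))
variable (hrefl : ∀ m, qle m m le_rfl = 𝟙 (Q m))
variable (htrans : ∀ m₁ m₂ m₃ (h12 : m₁ ≤ m₂) (h23 : m₂ ≤ m₃),
      qle m₁ m₂ h12 ≫ qle m₂ m₃ h23 = qle m₁ m₃ (h12.trans h23))
variable (hη : ∀ m, qle m (Order.succ m) (Order.le_succ m) = T.η.app (Q m) ≫ vs m)
variable (hsucc : ∀ m : Ordinal.{v},
      ∃ w : (T.μ.app (Q m) ≫ T.map (qle m (Order.succ m) (Order.le_succ m))) ≫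
            vs (Order.succ m) = T.map (vs m) ≫ vs (Order.succ m),
        Nonempty (IsColimit (Cofork.ofπ (vs (Order.succ m)) w)))
variable (hlimv : ∀ n (hn : Order.IsSuccLimit n) (m) (hm : m < n),
      (T.μ.app (Q m) ≫ T.map (qle m n hm.le)) ≫ vs n =
        (T.map (vs m) ≫ T.map (qle (Order.succ m) n (hn.succ_lt hm).le)) ≫ vs n)

/-- proof-irrelevant rewriting helper -/
theorem qle_irrel {m m' : Ordinal.{v}} (h h' : m ≤ m') : qle m m' h = qle m m' h' := rfl

include hrefl htrans hη hsucc hlimv in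
/-- Naturality of `v` in the stage: `T(q_{m,m'}) ≫ v_{m'} = v_m ≫ q_{succ m, succ m'}`. -/
theorem natv : ∀ (m' m : Ordinal.{v}) (h : m ≤ m'),
    T.map (qle m m' h) ≫ vs m' =
      vs m ≫ qle (Order.succ m) (Order.succ m') (succ_le_succ h) := by
  intro m'
  induction m' using Ordinal.induction with
  | h m' IH =>
  intro m h
  rcases eq_or_lt_of_le h with rfl | hlt
  · rw [hrefl, hrefl]; simp
  rcases Ordinal.zero_or_succ_or_isSuccLimit m' with rfl | ⟨k, rfl⟩ | hl
  · exact absurd hlt (zero_le (a := m)).not_gt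
  · have hmk : m ≤ k := by rwa [lt_succ_iff] at hlt
    obtain ⟨hw, -⟩ := hsucc k
    have e1 : vs m ≫ qle (Order.succ m) (Order.succ (Order.succ k)) (succ_le_succ h) =
        vs m ≫ qle (Order.succ m) (Order.succ k) (succ_le_succ hmk) ≫
          qle (Order.succ k) (Order.succ (Order.succ k)) (Order.le_succ _) := by
      rw [htrans]
    rw [e1, ← Category.assoc, ← IH k (lt_succ k) m hmk, Category.assoc, hη (Order.succ k)]
    have e2 : vs k ≫ T.η.app (Q (Order.succ k)) =
        T.η.app (T.obj (Q k)) ≫ T.map (vs k) := by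
      have := T.η.naturality (vs k); simpa using this
    rw [← Category.assoc (vs k), e2]
    simp only [Category.assoc]
    rw [← hw]
    simp only [Category.assoc]
    rw [← Category.assoc (T.η.app (T.obj (Q k))), Monad.left_unit, Category.id_comp,
      ← Category.assoc, ← T.map_comp, htrans]
  · have h1 := hlimv m' hl m hlt
    have e2 : T.η.app (T.obj (Q m)) ≫ (T.μ.app (Q m) ≫ T.map (qle m m' hlt.le)) ≫ vs m' =
        T.map (qle m m' hlt.le) ≫ vs m' := by
      rw [← Category.assoc, ← Category.assoc, Monad.left_unit, Category.id_comp]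
    calc T.map (qle m m' h) ≫ vs m'
        = T.η.app (T.obj (Q m)) ≫
            (T.map (vs m) ≫ T.map (qle (Order.succ m) m' (hl.succ_lt hlt).le)) ≫ vs m' := by
          rw [← h1, e2]
      _ = vs m ≫ qle (Order.succ m) (Order.succ m') (succ_le_succ h) := by
          have e3 : vs m ≫ T.η.app (Q (Order.succ m)) =
              T.η.app (T.obj (Q m)) ≫ T.map (vs m) := by
            have := T.η.naturality (vs m); simpa using this
          have e4 : qle (Order.succ m) m' (hl.succ_lt hlt).le ≫ T.η.app (Q m') =
              T.η.app (Q (Order.succ m)) ≫ T.map (qle (Order.succ m) m' (hl.succ_lt hlt).le) := by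
            have := T.η.naturality (qle (Order.succ m) m' (hl.succ_lt hlt).le); simpa using this
          simp only [Category.assoc]
          rw [← Category.assoc (T.η.app (T.obj (Q m))), ← e3, Category.assoc,
            ← Category.assoc (T.η.app (Q (Order.succ m))), ← e4, Category.assoc,
            ← hη m', htrans]


include hrefl htrans hη hsucc hlimv in
theorem cself : ∀ (m j : Ordinal.{v}) (hj : j < m),
    (T.μ.app (Q j) ≫ T.map (qle j m hj.le)) ≫ vs m =
      (T.map (vs j) ≫ T.map (qle (Order.succ j) m (Order.succ_le_of_lt hj))) ≫ vs m := by
  intro m j hj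
  have hN := natv T Q qle vs hrefl htrans hη hsucc hlimv
  obtain ⟨hw, -⟩ := hsucc j
  calc (T.μ.app (Q j) ≫ T.map (qle j m hj.le)) ≫ vs m
      = T.μ.app (Q j) ≫ vs j ≫ qle (Order.succ j) (Order.succ m) (succ_le_succ hj.le) := by
        rw [Category.assoc, hN m j hj.le]
    _ = T.μ.app (Q j) ≫ (T.map (qle j (Order.succ j) (Order.le_succ j)) ≫ vs (Order.succ j)) ≫
          qle (Order.succ (Order.succ j)) (Order.succ m) (succ_le_succ (Order.succ_le_of_lt hj)) := by
        rw [hN (Order.succ j) j (Order.le_succ j), Category.assoc,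
          htrans (Order.succ j) (Order.succ (Order.succ j)) (Order.succ m)]
    _ = (T.map (vs j) ≫ vs (Order.succ j)) ≫
          qle (Order.succ (Order.succ j)) (Order.succ m) (succ_le_succ (Order.succ_le_of_lt hj)) := by
        simp only [← Category.assoc]
        rw [hw]
    _ = (T.map (vs j) ≫ T.map (qle (Order.succ j) m (Order.succ_le_of_lt hj))) ≫ vs m := by
        rw [Category.assoc, Category.assoc, hN m (Order.succ j) (Order.succ_le_of_lt hj)]

variable (hlimvuniv : ∀ n (hn : Order.IsSuccLimit n) (Z : V) (w : T.obj (Q n) ⟶ Z),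
      (∀ m (hm : m < n),
        (T.μ.app (Q m) ≫ T.map (qle m n hm.le)) ≫ w =
          (T.map (vs m) ≫ T.map (qle (Order.succ m) n (hn.succ_lt hm).le)) ≫ w) →
      ∃! u : Q (Order.succ n) ⟶ Z, vs n ≫ u = w)

include hrefl htrans hη hsucc hlimvuniv in
theorem vdesc : ∀ (k : Ordinal.{v}), 0 < k → ∀ (Z : V) (w : T.obj (Q k) ⟶ Z),
    (∀ j (hj : j < k), (T.μ.app (Q j) ≫ T.map (qle j k hj.le)) ≫ w =
      (T.map (vs j) ≫ T.map (qle (Order.succ j) k (Order.succ_le_of_lt hj))) ≫ w) →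
    ∃! u : Q (Order.succ k) ⟶ Z, vs k ≫ u = w := by
  intro k hk Z w hw
  rcases Ordinal.zero_or_succ_or_isSuccLimit k with rfl | ⟨j, rfl⟩ | hl
  · exact absurd hk (lt_irrefl 0)
  · obtain ⟨we, ⟨hcol⟩⟩ := hsucc j
    have hcond : (T.μ.app (Q j) ≫ T.map (qle j (Order.succ j) (Order.le_succ j))) ≫ w =
        T.map (vs j) ≫ w := by
      have h2 := hw j (lt_succ j)
      rwa [hrefl, CategoryTheory.Functor.map_id, Category.comp_id] at h2
    obtain ⟨u, hu⟩ := Cofork.IsColimit.desc' hcol w hcond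
    refine ⟨u, hu, fun y hy => Cofork.IsColimit.hom_ext hcol ?_⟩
    rw [Cofork.π_ofπ] at hu ⊢
    rw [hy, hu]
  · exact hlimvuniv k hl Z w (fun m hm => hw m hm)

include hrefl htrans hη hsucc hlimv hlimvuniv in
theorem vepi : ∀ (k : Ordinal.{v}), 0 < k → ∀ {Z : V} (x y : Q (Order.succ k) ⟶ Z),
    vs k ≫ x = vs k ≫ y → x = y := by
  intro k hk Z x y hxy
  have hD := vdesc T Q qle vs hrefl htrans hη hsucc hlimvuniv k hk Z (vs k ≫ x) ?_
  · exact (hD.unique (by rfl) hxy.symm)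
  · intro j hj
    have := cself T Q qle vs hrefl htrans hη hsucc hlimv k j hj
    simp only [← Category.assoc]
    rw [this]


variable (hlimQ : ∀ n : Ordinal.{v}, Order.IsSuccLimit n → ∀ (Z : V) (w : ∀ m, m < n → (Q m ⟶ Z)),
      (∀ m m' (h : m ≤ m') (hm' : m' < n), qle m m' h ≫ w m' hm' = w m (lt_of_le_of_lt h hm')) →
      ∃! u : Q n ⟶ Z, ∀ m (hm : m < n), qle m n hm.le ≫ u = w m hm)

include hrefl htrans hη hsucc hlimv hlimvuniv hlimQ in
theorem stage0 (κ : Cardinal.{v}) (hκ : κ.IsRegular)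
    (hacc : PreservesCardFilteredColimits κ (T : V ⥤ V)) :
    ∃ (w : T.obj (Q κ.ord) ⟶ Q κ.ord) (u : Q (Order.succ κ.ord) ⟶ Q κ.ord),
      (∀ m (hm : m < κ.ord), T.map (qle m κ.ord hm.le) ≫ w =
        vs m ≫ qle (Order.succ m) κ.ord ((Cardinal.isSuccLimit_ord hκ.aleph0_le).succ_lt hm).le) ∧
      T.η.app (Q κ.ord) ≫ w = 𝟙 (Q κ.ord) ∧
      (T.μ.app (Q κ.ord) ≫ w = T.map w ≫ w) ∧
      vs κ.ord ≫ u = w ∧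
      qle κ.ord (Order.succ κ.ord) (Order.le_succ _) ≫ u = 𝟙 (Q κ.ord) ∧
      u ≫ qle κ.ord (Order.succ κ.ord) (Order.le_succ _) = 𝟙 (Q (Order.succ κ.ord)) := by
  have hN := natv T Q qle vs hrefl htrans hη hsucc hlimv
  set n₀ := κ.ord with hn₀
  have hlim : Order.IsSuccLimit n₀ := Cardinal.isSuccLimit_ord hκ.aleph0_le
  set J := n₀.ToType with hJ
  let e := Ordinal.ToType.mk (o := n₀)
  let og : J → Ordinal.{v} := fun j => (e.symm j).1
  have hog : ∀ j, og j < n₀ := fun j => (e.symm j).2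
  have hogle : ∀ {j j' : J}, (j ⟶ j') → og j ≤ og j' := by
    intro j j' φ
    exact Subtype.coe_le_coe.mpr (e.symm.le_iff_le.mpr (leOfHom φ))
  let F : J ⥤ V :=
    { obj := fun j => Q (og j)
      map := fun {j j'} φ => qle (og j) (og j') (hogle φ)
      map_id := fun j => hrefl _
      map_comp := fun φ ψ => (htrans _ _ _ _ _).symm }
  let c : Cocone F :=
    { pt := Q n₀
      ι := { app := fun j => qle (og j) n₀ (hog j).le
             naturality := fun j j' φ => by
               dsimp [F]; rw [htrans, Category.comp_id] } }
  -- J-indexed elements from ordinals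
  have hog' : ∀ m (hm : m < n₀), og (e ⟨m, hm⟩) = m := fun m hm =>
    congrArg Subtype.val (e.symm_apply_apply ⟨m, hm⟩)
  have hex : ∀ m, m < n₀ → ∃ j : J, og j = m := fun m hm => ⟨e ⟨m, hm⟩, hog' m hm⟩
  -- the canonical family associated to a cocone over `F`
  let wfam : ∀ (s : Cocone F) m, m < n₀ → (Q m ⟶ s.pt) := fun s m hm =>
    qle m (og (e ⟨m, hm⟩)) (hog' m hm).ge ≫ s.ι.app (e ⟨m, hm⟩)
  have hleg : ∀ (s : Cocone F) (j : J) m (hm : m < n₀) (hmog : m ≤ og j),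
      qle m (og j) hmog ≫ s.ι.app j = wfam s m hm := by
    intro s j m hm hmog
    have hle : e ⟨m, hm⟩ ≤ j := by
      rw [← e.apply_symm_apply j]
      exact e.le_iff_le.mpr (Subtype.mk_le_mk.mpr hmog)
    have hnat := s.ι.naturality (homOfLE hle)
    dsimp [F] at hnat
    rw [Category.comp_id] at hnat
    show qle m (og j) hmog ≫ s.ι.app j =
      qle m (og (e ⟨m, hm⟩)) (hog' m hm).ge ≫ s.ι.app (e ⟨m, hm⟩)
    rw [← hnat, ← Category.assoc, htrans]
  have hcompat : ∀ (s : Cocone F), ∀ m m' (h : m ≤ m') (hm' : m' < n₀),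
      qle m m' h ≫ wfam s m' hm' = wfam s m (lt_of_le_of_lt h hm') := by
    intro s m m' h hm'
    show qle m m' h ≫ qle m' (og (e ⟨m', hm'⟩)) (hog' m' hm').ge ≫ s.ι.app (e ⟨m', hm'⟩) = _
    rw [← Category.assoc, htrans]
    exact hleg s (e ⟨m', hm'⟩) m (lt_of_le_of_lt h hm') (h.trans (hog' m' hm').ge)
  have hdesc : ∀ s : Cocone F, ∃! u : Q n₀ ⟶ s.pt, ∀ m (hm : m < n₀),
      qle m n₀ hm.le ≫ u = wfam s m hm := fun s => hlimQ n₀ hlim s.pt (wfam s) (hcompat s)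
  -- `c` is a colimit cocone
  have hc : IsColimit c := by
    refine IsColimit.mk (fun s => (hdesc s).exists.choose) (fun s j => ?_) (fun s m hm => ?_)
    · have h1 := (hdesc s).exists.choose_spec (og j) (hog j)
      have h2 := hleg s j (og j) (hog j) le_rfl
      rw [hrefl, Category.id_comp] at h2
      show qle (og j) n₀ (hog j).le ≫ _ = s.ι.app j
      rw [h1, ← h2]
    · refine ((hdesc s).unique ?_ (hdesc s).exists.choose_spec)
      intro m' hm'
      have h2 := hleg s (e ⟨m', hm'⟩) m' hm' (hog' m' hm').ge
      calc qle m' n₀ hm'.le ≫ m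
          = (qle m' (og (e ⟨m', hm'⟩)) (hog' m' hm').ge ≫
              qle (og (e ⟨m', hm'⟩)) n₀ (hog (e ⟨m', hm'⟩)).le) ≫ m := by rw [htrans]
        _ = qle m' (og (e ⟨m', hm'⟩)) (hog' m' hm').ge ≫ s.ι.app (e ⟨m', hm'⟩) := by
            rw [Category.assoc]; exact congrArg _ (hm _)
        _ = wfam s m' hm' := rfl
  -- J is kappa-filtered
  have hfil : IsCardFiltered.{v} κ J := by
    intro K instK G hK
    by_cases hK0 : IsEmpty K
    · exact ⟨⟨e ⟨0, hlim.pos⟩,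
        { app := fun k => (hK0.false k).elim, naturality := fun {k k'} φ => (hK0.false k).elim }⟩⟩
    · haveI : Nonempty K := not_isEmpty_iff.mp hK0
      have hKlt : Cardinal.mk K < κ := lt_of_le_of_lt (Cardinal.mk_le_of_injective
          (f := fun k : K => (⟨k, k, 𝟙 k⟩ : Σ a b : K, a ⟶ b))
          (fun a b hab => congrArg Sigma.fst hab)) hK
      have hsup : (⨆ k : K, og (G.obj k)) < n₀ := by
        refine Ordinal.iSup_lt_ord ?_ (fun k => hog _)
        rw [hκ.cof_eq]
        exact hKlt
      refine ⟨⟨e ⟨_, hsup⟩,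
        { app := fun k => homOfLE ?_
          naturality := fun k k' φ => Subsingleton.elim _ _ }⟩⟩
      have h1 : og (G.obj k) ≤ ⨆ k : K, og (G.obj k) := Ordinal.le_iSup _ k
      rw [← e.apply_symm_apply (G.obj k)]
      exact e.le_iff_le.mpr (Subtype.coe_le_coe.mp h1)
  -- T preserves the colimit
  obtain ⟨pres⟩ := hacc J inferInstance hfil
  haveI := pres
  have hTc := isColimitOfPreserves (T : V ⥤ V) hc
  have hT2c := isColimitOfPreserves (T : V ⥤ V) hTc
  let c2 : Cocone (F ⋙ (T : V ⥤ V)) :=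
    { pt := Q n₀
      ι := { app := fun j => vs (og j) ≫ qle (Order.succ (og j)) n₀ (hlim.succ_lt (hog j)).le
             naturality := fun j j' φ => by
               dsimp [F]
               rw [Category.comp_id, ← Category.assoc, hN (og j') (og j) (hogle φ),
                 Category.assoc, htrans] } }
  let w : T.obj (Q n₀) ⟶ Q n₀ := hTc.desc c2
  have hwleg : ∀ j : J, T.map (qle (og j) n₀ (hog j).le) ≫ w =
      vs (og j) ≫ qle (Order.succ (og j)) n₀ (hlim.succ_lt (hog j)).le := by
    intro j
    have h1 := hTc.fac c2 j
    simpa [c2] using h1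
  have hwleg' : ∀ m (hm : m < n₀), T.map (qle m n₀ hm.le) ≫ w =
      vs m ≫ qle (Order.succ m) n₀ (hlim.succ_lt hm).le := by
    intro m hm
    obtain ⟨j, rfl⟩ := hex m hm
    exact hwleg j
  have hTex : ∀ {Z : V} (x y : T.obj (Q n₀) ⟶ Z),
      (∀ m (hm : m < n₀), T.map (qle m n₀ hm.le) ≫ x = T.map (qle m n₀ hm.le) ≫ y) → x = y := by
    intro Z x y hxy
    apply hTc.hom_ext
    intro j
    simpa using hxy (og j) (hog j)
  have hT2ex : ∀ {Z : V} (x y : T.obj (T.obj (Q n₀)) ⟶ Z),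
      (∀ m (hm : m < n₀),
        T.map (T.map (qle m n₀ hm.le)) ≫ x = T.map (T.map (qle m n₀ hm.le)) ≫ y) → x = y := by
    intro Z x y hxy
    apply hT2c.hom_ext
    intro j
    simpa using hxy (og j) (hog j)
  have hkey : ∀ m (hm : m < n₀),
      T.map (vs m) ≫ T.map (qle (Order.succ m) n₀ (hlim.succ_lt hm).le) ≫ w
        = T.μ.app (Q m) ≫ T.map (qle m n₀ hm.le) ≫ w := by
    intro m hm
    rw [hwleg' (Order.succ m) (hlim.succ_lt hm), hwleg' m hm]
    obtain ⟨hw2, -⟩ := hsucc m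
    rw [← Category.assoc, ← hw2]
    simp only [Category.assoc]
    rw [← Category.assoc (T.map (qle m (Order.succ m) (Order.le_succ m))),
      hN (Order.succ m) m (Order.le_succ m), Category.assoc, htrans]
  have hwassoc : T.μ.app (Q n₀) ≫ w = T.map w ≫ w := by
    apply hT2ex
    intro m hm
    have hμ : T.map (T.map (qle m n₀ hm.le)) ≫ T.μ.app (Q n₀) =
        T.μ.app (Q m) ≫ T.map (qle m n₀ hm.le) := by
      have h2 := T.μ.naturality (qle m n₀ hm.le); simpa using h2
    rw [← Category.assoc, hμ, Category.assoc,
      ← Category.assoc (T.map (T.map (qle m n₀ hm.le))), ← Functor.map_comp, hwleg' m hm,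
      Functor.map_comp, Category.assoc, hkey m hm, hwleg' m hm]
  have hCw : ∀ m (hm : m < n₀), (T.μ.app (Q m) ≫ T.map (qle m n₀ hm.le)) ≫ w =
      (T.map (vs m) ≫ T.map (qle (Order.succ m) n₀ (hlim.succ_lt hm).le)) ≫ w := by
    intro m hm
    rw [Category.assoc, Category.assoc, hkey m hm]
  obtain ⟨u, hu, huuniq⟩ := hlimvuniv n₀ hlim (Q n₀) w hCw
  have hunit : T.η.app (Q n₀) ≫ w = 𝟙 (Q n₀) := by
    apply hc.hom_ext
    intro j
    show qle (og j) n₀ (hog j).le ≫ T.η.app (Q n₀) ≫ w = qle (og j) n₀ (hog j).le ≫ 𝟙 _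
    rw [Category.comp_id]
    have hηn : qle (og j) n₀ (hog j).le ≫ T.η.app (Q n₀) =
        T.η.app (Q (og j)) ≫ T.map (qle (og j) n₀ (hog j).le) := by
      have h2 := T.η.naturality (qle (og j) n₀ (hog j).le); simpa using h2
    rw [← Category.assoc, hηn, Category.assoc, hwleg j, ← Category.assoc, ← hη (og j), htrans]
  have hqu : qle n₀ (Order.succ n₀) (Order.le_succ n₀) ≫ u = 𝟙 (Q n₀) := by
    rw [hη n₀, Category.assoc, hu, hunit]
  have hwq : w ≫ qle n₀ (Order.succ n₀) (Order.le_succ n₀) = vs n₀ := by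
    apply hTex
    intro m hm
    rw [← Category.assoc, hwleg' m hm, hN n₀ m hm.le, Category.assoc, htrans]
  have huq : u ≫ qle n₀ (Order.succ n₀) (Order.le_succ n₀) = 𝟙 (Q (Order.succ n₀)) := by
    obtain ⟨u', hu', huniq'⟩ := hlimvuniv n₀ hlim (Q (Order.succ n₀)) (vs n₀)
      (fun m hm => hlimv n₀ hlim m hm)
    have h1 : u ≫ qle n₀ (Order.succ n₀) (Order.le_succ n₀) = u' :=
      huniq' _ (by
        show vs n₀ ≫ u ≫ qle n₀ (Order.succ n₀) (Order.le_succ n₀) = vs n₀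
        rw [← Category.assoc, hu, hwq])
    have h2 : 𝟙 (Q (Order.succ n₀)) = u' := huniq' _ (by
        show vs n₀ ≫ 𝟙 _ = vs n₀
        rw [Category.comp_id])
    rw [h1, h2]
  exact ⟨w, u, hwleg', hunit, hwassoc, hu, hqu, huq⟩

include hrefl htrans hη hsucc hlimv hlimvuniv hlimQ in
theorem propagate (n₀ : Ordinal.{v}) (hlim₀ : Order.IsSuccLimit n₀)
    (w : T.obj (Q n₀) ⟶ Q n₀)
    (hwleg : ∀ m (hm : m < n₀), T.map (qle m n₀ hm.le) ≫ w =
      vs m ≫ qle (Order.succ m) n₀ (hlim₀.succ_lt hm).le)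
    (hunit : T.η.app (Q n₀) ≫ w = 𝟙 (Q n₀))
    (hassoc : T.μ.app (Q n₀) ≫ w = T.map w ≫ w)
    (hwq : w ≫ qle n₀ (Order.succ n₀) (Order.le_succ _) = vs n₀) :
    ∀ n (h : n₀ ≤ n), IsIso (qle n₀ n h) := by
  have hN := natv T Q qle vs hrefl htrans hη hsucc hlimv
  have h0pos : (0 : Ordinal.{v}) < n₀ := hlim₀.pos
  intro n
  induction n using Ordinal.induction with
  | h n IH =>
  intro h
  rcases eq_or_lt_of_le h with rfl | hlt
  · rw [show qle n₀ n₀ h = 𝟙 (Q n₀) from hrefl n₀]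
    infer_instance
  rcases Ordinal.zero_or_succ_or_isSuccLimit n with rfl | ⟨k, rfl⟩ | hl
  · exact absurd hlt (zero_le (a := n₀)).not_gt
  · -- successor case
    have hk : n₀ ≤ k := by
      by_contra hc
      exact absurd (hlim₀.succ_lt (lt_of_not_ge hc)) (not_lt.mpr h)
    have h0k : (0 : Ordinal.{v}) < k := lt_of_lt_of_le h0pos hk
    haveI hφ : IsIso (qle n₀ k hk) := IH k (lt_succ k) hk
    set ak : T.obj (Q k) ⟶ Q k :=
      T.map (inv (qle n₀ k hk)) ≫ w ≫ qle n₀ k hk with hak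
    have hAct : ∀ j (hj : j < k),
        vs j ≫ qle (Order.succ j) k (Order.succ_le_of_lt hj) ≫ inv (qle n₀ k hk) =
          T.map (qle j k hj.le ≫ inv (qle n₀ k hk)) ≫ w := by
      intro j hj
      rcases le_or_gt (Order.succ j) n₀ with hsj | hsj
      · have hjn : j < n₀ := lt_of_lt_of_le (lt_succ j) hsj
        have e1 : qle j k hj.le ≫ inv (qle n₀ k hk) = qle j n₀ hjn.le := by
          rw [IsIso.comp_inv_eq, htrans]
        have e2 : qle (Order.succ j) k (Order.succ_le_of_lt hj) ≫ inv (qle n₀ k hk) =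
            qle (Order.succ j) n₀ hsj := by
          rw [IsIso.comp_inv_eq, htrans]
        rw [e2, e1]
        exact (hwleg j hjn).symm
      · have hjn : n₀ ≤ j := lt_succ_iff.mp hsj
        haveI hψ : IsIso (qle n₀ j hjn) := IH j (hj.trans (lt_succ k)) hjn
        haveI hψ' : IsIso (qle n₀ (Order.succ j) (hjn.trans (Order.le_succ j))) :=
          IH (Order.succ j) (succ_lt_succ_iff.mpr hj) _
        have e1 : qle j k hj.le ≫ inv (qle n₀ k hk) = inv (qle n₀ j hjn) := by
          rw [IsIso.comp_inv_eq, IsIso.eq_inv_comp, htrans]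
        have e2 : qle (Order.succ j) k (Order.succ_le_of_lt hj) ≫ inv (qle n₀ k hk) =
            inv (qle n₀ (Order.succ j) (hjn.trans (Order.le_succ j))) := by
          rw [IsIso.comp_inv_eq, IsIso.eq_inv_comp, htrans]
        rw [e2, e1, IsIso.comp_inv_eq, Category.assoc,
          ← htrans n₀ (Order.succ n₀) (Order.succ j) (Order.le_succ n₀) (succ_le_succ hjn),
          ← Category.assoc w, hwq, ← hN j n₀ hjn, ← Category.assoc, ← Functor.map_comp,
          IsIso.inv_hom_id, CategoryTheory.Functor.map_id, Category.id_comp]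
    have hC : ∀ j (hj : j < k),
        (T.μ.app (Q j) ≫ T.map (qle j k hj.le)) ≫ ak =
          (T.map (vs j) ≫ T.map (qle (Order.succ j) k (Order.succ_le_of_lt hj))) ≫ ak := by
      intro j hj
      have hμn : T.map (T.map (qle j k hj.le ≫ inv (qle n₀ k hk))) ≫ T.μ.app (Q n₀) =
          T.μ.app (Q j) ≫ T.map (qle j k hj.le ≫ inv (qle n₀ k hk)) := by
        have h2 := T.μ.naturality (qle j k hj.le ≫ inv (qle n₀ k hk)); simpa using h2
      have hL : (T.μ.app (Q j) ≫ T.map (qle j k hj.le)) ≫ ak =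
          T.map (T.map (qle j k hj.le ≫ inv (qle n₀ k hk))) ≫
            T.map w ≫ w ≫ qle n₀ k hk := by
        rw [hak]
        calc (T.μ.app (Q j) ≫ T.map (qle j k hj.le)) ≫
              T.map (inv (qle n₀ k hk)) ≫ w ≫ qle n₀ k hk
            = (T.μ.app (Q j) ≫ T.map (qle j k hj.le ≫ inv (qle n₀ k hk))) ≫
                w ≫ qle n₀ k hk := by
              rw [Functor.map_comp]; simp only [Category.assoc]
          _ = (T.map (T.map (qle j k hj.le ≫ inv (qle n₀ k hk))) ≫ T.μ.app (Q n₀)) ≫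
                w ≫ qle n₀ k hk := by rw [hμn]
          _ = T.map (T.map (qle j k hj.le ≫ inv (qle n₀ k hk))) ≫
                (T.μ.app (Q n₀) ≫ w) ≫ qle n₀ k hk := by simp only [Category.assoc]
          _ = _ := by rw [hassoc]; simp only [Category.assoc]
      have hR : (T.map (vs j) ≫ T.map (qle (Order.succ j) k (Order.succ_le_of_lt hj))) ≫ ak =
          T.map (T.map (qle j k hj.le ≫ inv (qle n₀ k hk))) ≫
            T.map w ≫ w ≫ qle n₀ k hk := by
        rw [hak]
        calc (T.map (vs j) ≫ T.map (qle (Order.succ j) k (Order.succ_le_of_lt hj))) ≫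
              T.map (inv (qle n₀ k hk)) ≫ w ≫ qle n₀ k hk
            = T.map (vs j ≫ qle (Order.succ j) k (Order.succ_le_of_lt hj) ≫
                inv (qle n₀ k hk)) ≫ w ≫ qle n₀ k hk := by
              simp only [Functor.map_comp, Category.assoc]
          _ = T.map (T.map (qle j k hj.le ≫ inv (qle n₀ k hk)) ≫ w) ≫ w ≫ qle n₀ k hk := by
              rw [hAct j hj]
          _ = _ := by rw [Functor.map_comp]; simp only [Category.assoc]
      rw [hL, hR]
    obtain ⟨u, hu, -⟩ := vdesc T Q qle vs hrefl htrans hη hsucc hlimvuniv k h0k (Q k) ak hC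
    have hqu : qle k (Order.succ k) (Order.le_succ k) ≫ u = 𝟙 (Q k) := by
      rw [hη k, Category.assoc, hu, hak]
      have hη2 : T.η.app (Q k) ≫ T.map (inv (qle n₀ k hk)) =
          inv (qle n₀ k hk) ≫ T.η.app (Q n₀) := by
        have h2 := T.η.naturality (inv (qle n₀ k hk))
        dsimp only [Functor.id_map] at h2
        exact h2.symm
      rw [← Category.assoc, hη2, Category.assoc, ← Category.assoc (T.η.app (Q n₀)), hunit]
      simp
    have huq : u ≫ qle k (Order.succ k) (Order.le_succ k) = 𝟙 (Q (Order.succ k)) := by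
      apply vepi T Q qle vs hrefl htrans hη hsucc hlimv hlimvuniv k h0k
      rw [← Category.assoc, hu, Category.comp_id, hak]
      simp only [Category.assoc]
      rw [htrans n₀ k (Order.succ k) hk (Order.le_succ k),
        ← htrans n₀ (Order.succ n₀) (Order.succ k) (Order.le_succ n₀) (succ_le_succ hk),
        ← Category.assoc w, hwq, ← hN k n₀ hk, ← Category.assoc, ← Functor.map_comp,
        IsIso.inv_hom_id, CategoryTheory.Functor.map_id, Category.id_comp]
    haveI : IsIso (qle k (Order.succ k) (Order.le_succ k)) := ⟨⟨u, hqu, huq⟩⟩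
    rw [show qle n₀ (Order.succ k) h = qle n₀ k hk ≫ qle k (Order.succ k) (Order.le_succ k) from
      (htrans _ _ _ _ _).symm]
    infer_instance
  · -- limit case
    let g : ∀ j, j < n → (Q j ⟶ Q n₀) := fun j hj =>
      if hjn : j ≤ n₀ then qle j n₀ hjn else
        letI := IH j hj (le_of_not_ge hjn)
        inv (qle n₀ j (le_of_not_ge hjn))
    have hgpos : ∀ j (hj : j < n) (hjn : j ≤ n₀), g j hj = qle j n₀ hjn := fun j hj hjn =>
      dif_pos hjn
    have hginv1 : ∀ j (hj : j < n) (hjn : n₀ ≤ j), qle n₀ j hjn ≫ g j hj = 𝟙 (Q n₀) := by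
      intro j hj hjn
      rcases le_or_gt j n₀ with hjle | hjgt
      · rw [hgpos j hj hjle, htrans]
        exact hrefl n₀
      · haveI := IH j hj hjn
        rw [show g j hj = letI := IH j hj (le_of_not_ge (not_le.mpr hjgt))
            inv (qle n₀ j (le_of_not_ge (not_le.mpr hjgt))) from dif_neg (not_le.mpr hjgt)]
        exact IsIso.hom_inv_id _
    have hcomp : ∀ j j' (hjj : j ≤ j') (hj' : j' < n),
        qle j j' hjj ≫ g j' hj' = g j (lt_of_le_of_lt hjj hj') := by
      intro j j' hjj hj'
      rcases le_or_gt j' n₀ with hj'n | hj'n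
      · rw [hgpos j' hj' hj'n, hgpos j (lt_of_le_of_lt hjj hj') (hjj.trans hj'n), htrans]
      · rcases le_or_gt j n₀ with hjn | hjn
        · rw [hgpos j (lt_of_le_of_lt hjj hj') hjn, ← htrans j n₀ j' hjn hj'n.le, Category.assoc,
            hginv1 j' hj' hj'n.le, Category.comp_id]
        · haveI := IH j (lt_of_le_of_lt hjj hj') hjn.le
          rw [← cancel_epi (qle n₀ j hjn.le), ← Category.assoc, htrans,
            hginv1 j' hj' (hjn.le.trans hjj), hginv1 j (lt_of_le_of_lt hjj hj') hjn.le]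
    obtain ⟨r, hr, -⟩ := hlimQ n hl (Q n₀) g hcomp
    have h1 : qle n₀ n hlt.le ≫ r = 𝟙 (Q n₀) := by
      have h2 := hr n₀ hlt
      rw [hgpos n₀ hlt le_rfl, hrefl] at h2
      exact h2
    have h2 : r ≫ qle n₀ n hlt.le = 𝟙 (Q n) := by
      obtain ⟨x, hx, hxuniq⟩ := hlimQ n hl (Q n) (fun j hj => qle j n hj.le)
        (fun j j' hjj hj' => htrans _ _ _ _ _)
      have ha : r ≫ qle n₀ n hlt.le = x := by
        refine hxuniq _ ?_
        intro j hj
        rw [← Category.assoc, hr j hj]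
        rcases le_or_gt j n₀ with hjn | hjn
        · show g j hj ≫ _ = _
          rw [hgpos j hj hjn, htrans]
        · haveI := IH j hj hjn.le
          show g j hj ≫ _ = _
          rw [← cancel_epi (qle n₀ j hjn.le), ← Category.assoc, hginv1 j hj hjn.le,
            Category.id_comp, htrans]
      have hb : 𝟙 (Q n) = x := hxuniq _ (fun j hj => Category.comp_id _)
      rw [ha, hb]
    exact ⟨⟨r, h1, h2⟩⟩

/-- The recursively defined predicate characterising the canonical cocone maps `Q m ⟶ Z`. -/
def Rrel (Z : V) (z : T.obj Z ⟶ Z) (h : Q 0 ⟶ Z) : ∀ m : Ordinal.{v}, (Q m ⟶ Z) → Prop :=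
  fun m => Ordinal.limitRecOn m (fun u => u = h)
    (fun o Ro u => ∀ u' : Q o ⟶ Z, Ro u' → vs o ≫ u = T.map u' ≫ z)
    (fun o _ho ih u => ∀ j (hj : j < o) (u' : Q j ⟶ Z), ih j hj u' → qle j o hj.le ≫ u = u')

theorem Rrel_zero (Z : V) (z : T.obj Z ⟶ Z) (h : Q 0 ⟶ Z) (u : Q 0 ⟶ Z) :
    Rrel T Q qle vs Z z h 0 u ↔ u = h := by
  unfold Rrel
  rw [Ordinal.limitRecOn_zero]

theorem Rrel_succ (Z : V) (z : T.obj Z ⟶ Z) (h : Q 0 ⟶ Z) (o : Ordinal.{v})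
    (u : Q (Order.succ o) ⟶ Z) :
    Rrel T Q qle vs Z z h (Order.succ o) u ↔
      ∀ u' : Q o ⟶ Z, Rrel T Q qle vs Z z h o u' → vs o ≫ u = T.map u' ≫ z := by
  unfold Rrel
  rw [Ordinal.limitRecOn_succ]

theorem Rrel_limit (Z : V) (z : T.obj Z ⟶ Z) (h : Q 0 ⟶ Z) (o : Ordinal.{v}) (ho : Order.IsSuccLimit o)
    (u : Q o ⟶ Z) :
    Rrel T Q qle vs Z z h o u ↔
      ∀ j (hj : j < o) (u' : Q j ⟶ Z), Rrel T Q qle vs Z z h j u' →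
        qle j o hj.le ≫ u = u' := by
  unfold Rrel
  rw [Ordinal.limitRecOn_limit _ _ _ _ ho]

include hη in
theorem vepi0 (b : T.obj (Q 0) ⟶ Q 0) (hb : T.η.app (Q 0) ≫ b = 𝟙 (Q 0))
    (hv0' : vs 0 = b ≫ qle 0 (Order.succ 0) (Order.le_succ 0))
    {A0 : V} {ff gf : A0 ⟶ Q 0}
    {w0' : ff ≫ qle 0 (Order.succ 0) (Order.le_succ 0) =
      gf ≫ qle 0 (Order.succ 0) (Order.le_succ 0)}
    (hcol : IsColimit (Cofork.ofπ (qle 0 (Order.succ 0) (Order.le_succ 0)) w0')) :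
    ∀ {W : V} (x y : Q (Order.succ 0) ⟶ W), vs 0 ≫ x = vs 0 ≫ y → x = y := by
  intro W x y hxy
  rw [hv0', Category.assoc, Category.assoc] at hxy
  have h2 := congrArg (fun t => T.η.app (Q 0) ≫ t) hxy
  dsimp at h2
  simp only [← Category.assoc] at h2
  rw [hb] at h2
  simp only [Category.id_comp] at h2
  exact Cofork.IsColimit.hom_ext hcol h2

include hrefl htrans hη hsucc hlimv hlimvuniv hlimQ in
theorem theta (b : T.obj (Q 0) ⟶ Q 0) (hb : T.η.app (Q 0) ≫ b = 𝟙 (Q 0))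
    (hv0' : vs 0 = b ≫ qle 0 (Order.succ 0) (Order.le_succ 0))
    {A0 : V} {ff gf : A0 ⟶ Q 0}
    {w0' : ff ≫ qle 0 (Order.succ 0) (Order.le_succ 0) =
      gf ≫ qle 0 (Order.succ 0) (Order.le_succ 0)}
    (hcol : IsColimit (Cofork.ofπ (qle 0 (Order.succ 0) (Order.le_succ 0)) w0'))
    (Z : V) (z : T.obj Z ⟶ Z) (hzu : T.η.app Z ≫ z = 𝟙 Z)
    (hza : T.μ.app Z ≫ z = T.map z ≫ z)
    (h : Q 0 ⟶ Z) (hfh : ff ≫ h = gf ≫ h) (hbh : T.map h ≫ z = b ≫ h) :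
    ∀ m : Ordinal.{v}, ∃ u : Q m ⟶ Z, Rrel T Q qle vs Z z h m u ∧
      (∀ u', Rrel T Q qle vs Z z h m u' → u' = u) ∧
      (∀ j (hj : j ≤ m) (u' : Q j ⟶ Z), Rrel T Q qle vs Z z h j u' → qle j m hj ≫ u = u') := by
  intro m
  induction m using Ordinal.induction with
  | h m IH =>
  rcases Ordinal.zero_or_succ_or_isSuccLimit m with rfl | ⟨k, rfl⟩ | hl
  · refine ⟨h, (Rrel_zero T Q qle vs Z z h h).mpr rfl, ?_, ?_⟩
    · intro u' hu'
      exact (Rrel_zero T Q qle vs Z z h u').mp hu'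
    · intro j hj u' hu'
      obtain rfl := nonpos_iff_eq_zero.mp hj
      rw [hrefl, Category.id_comp]
      exact ((Rrel_zero T Q qle vs Z z h u').mp hu').symm
  · obtain ⟨uk, hRk, huniqk, hcohk⟩ := IH k (lt_succ k)
    rcases eq_or_lt_of_le ((zero_le (a := k))) with rfl | h0k
    · -- k = 0
      have huk : uk = h := (Rrel_zero T Q qle vs Z z h uk).mp hRk
      obtain ⟨u1, hu1⟩ := Cofork.IsColimit.desc' hcol h hfh
      rw [Cofork.π_ofπ] at hu1
      have hvs : vs 0 ≫ u1 = T.map h ≫ z := by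
        rw [hv0', Category.assoc, hu1, hbh]
      have hR1 : Rrel T Q qle vs Z z h (Order.succ 0) u1 := by
        rw [Rrel_succ]
        intro u' hu'
        rw [(Rrel_zero T Q qle vs Z z h u').mp hu', hvs]
      refine ⟨u1, hR1, ?_, ?_⟩
      · intro u' hu'
        rw [Rrel_succ] at hu'
        have h2 : vs 0 ≫ u' = T.map h ≫ z :=
          hu' h ((Rrel_zero T Q qle vs Z z h h).mpr rfl)
        exact vepi0 T Q qle vs hη b hb hv0' hcol u' u1 (by rw [h2, hvs])
      · intro j hj u' hu'
        rcases eq_or_lt_of_le hj with rfl | hjlt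
        · rw [hrefl, Category.id_comp]
          rw [Rrel_succ] at hu' hR1
          have h2 : vs 0 ≫ u' = T.map h ≫ z :=
            hu' h ((Rrel_zero T Q qle vs Z z h h).mpr rfl)
          exact (vepi0 T Q qle vs hη b hb hv0' hcol u' u1 (by rw [h2, hvs])).symm
        · obtain rfl := nonpos_iff_eq_zero.mp (lt_succ_iff.mp hjlt)
          rw [hu1]
          exact ((Rrel_zero T Q qle vs Z z h u').mp hu').symm
    · -- 0 < k
      have hC : ∀ j (hj : j < k), (T.μ.app (Q j) ≫ T.map (qle j k hj.le)) ≫ T.map uk ≫ z =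
          (T.map (vs j) ≫ T.map (qle (Order.succ j) k (Order.succ_le_of_lt hj))) ≫
            T.map uk ≫ z := by
        intro j hj
        obtain ⟨uj, hRj, -, -⟩ := IH j (hj.trans (lt_succ k))
        obtain ⟨usj, hRsj, -, -⟩ := IH (Order.succ j)
          (lt_of_le_of_lt (Order.succ_le_of_lt hj) (lt_succ k))
        have hi : qle j k hj.le ≫ uk = uj := hcohk j hj.le uj hRj
        have hi' : qle (Order.succ j) k (Order.succ_le_of_lt hj) ≫ uk = usj :=
          hcohk (Order.succ j) (Order.succ_le_of_lt hj) usj hRsj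
        have hii : vs j ≫ usj = T.map uj ≫ z :=
          (Rrel_succ T Q qle vs Z z h j usj).mp hRsj uj hRj
        have hμn : T.map (T.map uj) ≫ T.μ.app Z = T.μ.app (Q j) ≫ T.map uj := by
          have h2 := T.μ.naturality uj; simpa using h2
        calc (T.μ.app (Q j) ≫ T.map (qle j k hj.le)) ≫ T.map uk ≫ z
            = T.μ.app (Q j) ≫ T.map uj ≫ z := by
              rw [Category.assoc, ← Category.assoc (T.map (qle j k hj.le)), ← Functor.map_comp,
                hi]
          _ = T.map (T.map uj) ≫ T.μ.app Z ≫ z := by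
              rw [← Category.assoc, ← hμn, Category.assoc]
          _ = T.map (T.map uj) ≫ T.map z ≫ z := by rw [hza]
          _ = T.map (T.map uj ≫ z) ≫ z := by rw [Functor.map_comp, Category.assoc]
          _ = T.map (vs j ≫ usj) ≫ z := by rw [hii]
          _ = (T.map (vs j) ≫ T.map (qle (Order.succ j) k (Order.succ_le_of_lt hj))) ≫
                T.map uk ≫ z := by
              rw [Functor.map_comp]
              simp only [Category.assoc]
              rw [← Category.assoc (T.map (qle (Order.succ j) k (Order.succ_le_of_lt hj))),
                ← Functor.map_comp, hi']
      obtain ⟨uS, huS, huSuniq⟩ := vdesc T Q qle vs hrefl htrans hη hsucc hlimvuniv k h0k Z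
        (T.map uk ≫ z) hC
      have hRS : Rrel T Q qle vs Z z h (Order.succ k) uS := by
        rw [Rrel_succ]
        intro u' hu'
        rw [huniqk u' hu', huS]
      have hqS : qle k (Order.succ k) (Order.le_succ k) ≫ uS = uk := by
        rw [hη k, Category.assoc, huS, ← Category.assoc]
        have hηn : T.η.app (Q k) ≫ T.map uk = uk ≫ T.η.app Z := by
          have h2 := T.η.naturality uk; simpa using h2.symm
        rw [hηn, Category.assoc, hzu, Category.comp_id]
      refine ⟨uS, hRS, ?_, ?_⟩
      · intro u' hu'
        rw [Rrel_succ] at hu'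
        exact huSuniq u' (hu' uk hRk)
      · intro j hj u' hu'
        rcases eq_or_lt_of_le hj with rfl | hjlt
        · rw [hrefl, Category.id_comp]
          rw [Rrel_succ] at hu'
          exact (huSuniq u' (hu' uk hRk)).symm
        · have hjk : j ≤ k := lt_succ_iff.mp hjlt
          rw [← htrans j k (Order.succ k) hjk (Order.le_succ k), Category.assoc, hqS]
          exact hcohk j hjk u' hu'
  · -- limit case
    have hcompat : ∀ j j' (hjj : j ≤ j') (hj' : j' < m),
        qle j j' hjj ≫ (IH j' hj').choose = (IH j (lt_of_le_of_lt hjj hj')).choose := by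
      intro j j' hjj hj'
      exact (IH j' hj').choose_spec.2.2 j hjj _ (IH j (lt_of_le_of_lt hjj hj')).choose_spec.1
    obtain ⟨uo, huo, huouniq⟩ := hlimQ m hl Z (fun j hj => (IH j hj).choose) hcompat
    have hRo : Rrel T Q qle vs Z z h m uo := by
      rw [Rrel_limit T Q qle vs Z z h m hl]
      intro j hj u' hu'
      rw [huo j hj]
      exact ((IH j hj).choose_spec.2.1 u' hu').symm
    refine ⟨uo, hRo, ?_, ?_⟩
    · intro u' hu'
      rw [Rrel_limit T Q qle vs Z z h m hl] at hu'
      refine huouniq u' ?_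
      intro j hj
      exact hu' j hj _ (IH j hj).choose_spec.1
    · intro j hj u' hu'
      rcases eq_or_lt_of_le hj with rfl | hjlt
      · rw [hrefl, Category.id_comp]
        rw [Rrel_limit T Q qle vs Z z h j hl] at hu'
        exact (huouniq u' (fun i hi => hu' i hi _ (IH i hi).choose_spec.1)).symm
      · rw [huo j hjlt]
        exact ((IH j hjlt).choose_spec.2.1 u' hu').symm

include hrefl htrans hη hsucc hlimv hlimvuniv hlimQ in
theorem descend (b : T.obj (Q 0) ⟶ Q 0) (hb : T.η.app (Q 0) ≫ b = 𝟙 (Q 0))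
    (hv0' : vs 0 = b ≫ qle 0 (Order.succ 0) (Order.le_succ 0))
    {A0 : V} {ff gf : A0 ⟶ Q 0}
    {w0' : ff ≫ qle 0 (Order.succ 0) (Order.le_succ 0) =
      gf ≫ qle 0 (Order.succ 0) (Order.le_succ 0)}
    (hcol : IsColimit (Cofork.ofπ (qle 0 (Order.succ 0) (Order.le_succ 0)) w0'))
    (Z : V) (z : T.obj Z ⟶ Z) (hzu : T.η.app Z ≫ z = 𝟙 Z)
    (hza : T.μ.app Z ≫ z = T.map z ≫ z)
    (h : Q 0 ⟶ Z) (hfh : ff ≫ h = gf ≫ h) (hbh : T.map h ≫ z = b ≫ h) :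
    ∃ ufam : ∀ m : Ordinal.{v}, (Q m ⟶ Z),
      ufam 0 = h ∧ (∀ m, vs m ≫ ufam (Order.succ m) = T.map (ufam m) ≫ z) ∧
      (∀ m m' (hmm : m ≤ m'), qle m m' hmm ≫ ufam m' = ufam m) := by
  have hth := theta T Q qle vs hrefl htrans hη hsucc hlimv hlimvuniv hlimQ b hb hv0' hcol Z z
    hzu hza h hfh hbh
  refine ⟨fun m => (hth m).choose, ?_, ?_, ?_⟩
  · exact (Rrel_zero T Q qle vs Z z h _).mp (hth 0).choose_spec.1
  · intro m
    have h2 := (hth (Order.succ m)).choose_spec.1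
    rw [Rrel_succ] at h2
    exact h2 _ (hth m).choose_spec.1
  · intro m m' hmm
    exact (hth m').choose_spec.2.2 m hmm _ (hth m).choose_spec.1

include hrefl htrans hη hsucc hlimv hlimvuniv hlimQ in
theorem descuniq (b : T.obj (Q 0) ⟶ Q 0) (hb : T.η.app (Q 0) ≫ b = 𝟙 (Q 0))
    (hv0' : vs 0 = b ≫ qle 0 (Order.succ 0) (Order.le_succ 0))
    {A0 : V} {ff gf : A0 ⟶ Q 0}
    {w0' : ff ≫ qle 0 (Order.succ 0) (Order.le_succ 0) =
      gf ≫ qle 0 (Order.succ 0) (Order.le_succ 0)}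
    (hcol : IsColimit (Cofork.ofπ (qle 0 (Order.succ 0) (Order.le_succ 0)) w0'))
    (n : Ordinal.{v}) (an : T.obj (Q n) ⟶ Q n)
    (hkey : ∀ k (hk : Order.succ k ≤ n), vs k ≫ qle (Order.succ k) n hk =
      T.map (qle k n ((Order.le_succ k).trans hk)) ≫ an)
    (Z : V) (z : T.obj Z ⟶ Z) (s s' : Q n ⟶ Z)
    (hs : T.map s ≫ z = an ≫ s) (hs' : T.map s' ≫ z = an ≫ s')
    (h0 : qle 0 n ((zero_le (a := n))) ≫ s = qle 0 n ((zero_le (a := n))) ≫ s') : s = s' := by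
  have hM : ∀ j (hj : j ≤ n), qle j n hj ≫ s = qle j n hj ≫ s' := by
    intro j
    induction j using Ordinal.induction with
    | h j IH =>
    intro hj
    rcases Ordinal.zero_or_succ_or_isSuccLimit j with rfl | ⟨k, rfl⟩ | hl
    · exact h0
    · have hkn : k ≤ n := (Order.le_succ k).trans hj
      have hcalc : ∀ (t : Q n ⟶ Z), T.map t ≫ z = an ≫ t →
          vs k ≫ qle (Order.succ k) n hj ≫ t = T.map (qle k n hkn ≫ t) ≫ z := by
        intro t ht
        rw [← Category.assoc, hkey k hj, Category.assoc, ← ht, ← Category.assoc,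
          ← Functor.map_comp]
      have h2 : vs k ≫ qle (Order.succ k) n hj ≫ s = vs k ≫ qle (Order.succ k) n hj ≫ s' := by
        rw [hcalc s hs, hcalc s' hs',
          show qle k n hkn ≫ s = qle k n hkn ≫ s' from IH k (lt_succ k) hkn]
      rcases eq_or_lt_of_le ((zero_le (a := k))) with rfl | h0k
      · exact vepi0 T Q qle vs hη b hb hv0' hcol _ _ h2
      · exact vepi T Q qle vs hrefl htrans hη hsucc hlimv hlimvuniv k h0k _ _ h2
    · obtain ⟨x, hx, hxuniq⟩ := hlimQ j hl Z (fun i hi => qle i n (hi.le.trans hj) ≫ s)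
        (fun i i' hii hi' => by rw [← Category.assoc, htrans])
      have ha : qle j n hj ≫ s = x := by
        refine hxuniq _ ?_
        intro i hi
        rw [← Category.assoc, htrans]
      have hb2 : qle j n hj ≫ s' = x := by
        refine hxuniq _ ?_
        intro i hi
        rw [← Category.assoc, htrans]
        exact (IH i hi (hi.le.trans hj)).symm
      rw [ha, hb2]
  have h2 := hM n le_rfl
  rw [hrefl, Category.id_comp, Category.id_comp] at h2
  exact h2

noncomputable def cofork_transport {X Y Z : V} {f g : X ⟶ Y} {π1 π2 : Y ⟶ Z} (hπ : π1 = π2)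
    {w1 : f ≫ π1 = g ≫ π1} {w2 : f ≫ π2 = g ≫ π2} (h : IsColimit (Cofork.ofπ π1 w1)) :
    IsColimit (Cofork.ofπ π2 w2) := by
  subst hπ
  exact h

end Aux

/-- Let `V` have filtered colimits and coequalisers, `T` a `λ`-accessible
monad on `V` and `f, g : (A,a) ⇉ (B,b)` a parallel pair of `T`-algebra maps.  Given the data
of the transfinite sequence `Q` of the paper --- `Q 0 = B`, at each step `v (m+1)` is the
coequaliser of `T(q m) ∘ μ` and `T (v m)`, with `q m = v m ∘ η`, and at limit stages `Q n` is
the colimit of the preceding sequence and `v n` the coequaliser of the two induced maps ---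
then for any ordinal `n` with `|n| ≥ λ`, the map `q_{<n} : B ⟶ Q n` is the coequaliser of `f`
and `g` in the category of `T`-algebras (in particular `q n` is invertible and `Q n` carries
the algebra structure `(q n)⁻¹ ∘ v n`). -/
theorem stmt17 {V : Type u} [Category.{v} V]
    [HasFilteredColimitsOfSize.{v, v} V] [HasCoequalizers V]
    (T : Monad V) (Aalg Balg : T.Algebra) (f g : Aalg ⟶ Balg)
    -- the transfinite sequence:
    (Q : Ordinal.{v} → V)
    (qle : ∀ m m' : Ordinal.{v}, m ≤ m' → (Q m ⟶ Q m'))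
    (vs : ∀ m : Ordinal.{v}, T.obj (Q m) ⟶ Q (Order.succ m))
    (h0 : Q 0 = Balg.A)
    (hrefl : ∀ m, qle m m le_rfl = 𝟙 (Q m))
    (htrans : ∀ m₁ m₂ m₃ (h12 : m₁ ≤ m₂) (h23 : m₂ ≤ m₃),
      qle m₁ m₂ h12 ≫ qle m₂ m₃ h23 = qle m₁ m₃ (h12.trans h23))
    -- `q m = v m ∘ η` for every `m`:
    (hη : ∀ m, qle m (Order.succ m) (Order.le_succ m) = T.η.app (Q m) ≫ vs m)
    -- base step: `q 0` is the coequaliser of `f` and `g` in `V`, and `v 0 = q 0 ∘ b`: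
    (w0 : f.f ≫ (eqToHom h0.symm ≫ qle 0 (Order.succ 0) (Order.le_succ 0)) =
      g.f ≫ (eqToHom h0.symm ≫ qle 0 (Order.succ 0) (Order.le_succ 0)))
    (hcoeq0 : Nonempty (IsColimit (Cofork.ofπ
      (eqToHom h0.symm ≫ qle 0 (Order.succ 0) (Order.le_succ 0)) w0)))
    (hv0 : vs 0 = eqToHom (show T.obj (Q 0) = T.obj Balg.A by rw [h0]) ≫ Balg.a ≫
      (eqToHom h0.symm ≫ qle 0 (Order.succ 0) (Order.le_succ 0)))
    -- successor step: `v (m+1)` is the coequaliser of `T(q m) ∘ μ` and `T(v m)`: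
    (hsucc : ∀ m : Ordinal.{v},
      ∃ w : (T.μ.app (Q m) ≫ T.map (qle m (Order.succ m) (Order.le_succ m))) ≫
            vs (Order.succ m) = T.map (vs m) ≫ vs (Order.succ m),
        Nonempty (IsColimit (Cofork.ofπ (vs (Order.succ m)) w)))
    -- limit steps: `Q n` is the colimit of the sequence below `n`:
    (hlimQ : ∀ n : Ordinal.{v}, Order.IsSuccLimit n → ∀ (Z : V) (w : ∀ m, m < n → (Q m ⟶ Z)),
      (∀ m m' (h : m ≤ m') (hm' : m' < n), qle m m' h ≫ w m' hm' = w m (lt_of_le_of_lt h hm')) →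
      ∃! u : Q n ⟶ Z, ∀ m (hm : m < n), qle m n hm.le ≫ u = w m hm)
    -- limit steps: `v n` coequalises the two maps induced from `colim_{m<n} T²(Q m)`:
    (hlimv : ∀ n (hn : Order.IsSuccLimit n) (m) (hm : m < n),
      (T.μ.app (Q m) ≫ T.map (qle m n hm.le)) ≫ vs n =
        (T.map (vs m) ≫ T.map (qle (Order.succ m) n (hn.succ_lt hm).le)) ≫ vs n)
    (hlimvuniv : ∀ n (hn : Order.IsSuccLimit n) (Z : V) (w : T.obj (Q n) ⟶ Z),
      (∀ m (hm : m < n),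
        (T.μ.app (Q m) ≫ T.map (qle m n hm.le)) ≫ w =
          (T.map (vs m) ≫ T.map (qle (Order.succ m) n (hn.succ_lt hm).le)) ≫ w) →
      ∃! u : Q (Order.succ n) ⟶ Z, vs n ≫ u = w)
    -- accessibility:
    (κ : Cardinal.{v}) (hκ : κ.IsRegular)
    (hacc : PreservesCardFilteredColimits κ (T : V ⥤ V))
    (n : Ordinal.{v}) (hn : κ ≤ n.card) :
    ∃ hiso : IsIso (qle n (Order.succ n) (Order.le_succ n)),
      letI : IsIso (qle n (Order.succ n) (Order.le_succ n)) := hiso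
      ∃ (hunit : T.η.app (Q n) ≫
            (vs n ≫ inv (qle n (Order.succ n) (Order.le_succ n))) = 𝟙 (Q n))
        (hassoc : T.μ.app (Q n) ≫ (vs n ≫ inv (qle n (Order.succ n) (Order.le_succ n))) =
          T.map (vs n ≫ inv (qle n (Order.succ n) (Order.le_succ n))) ≫
            (vs n ≫ inv (qle n (Order.succ n) (Order.le_succ n))))
        (hmor : T.map (eqToHom h0.symm ≫ qle 0 n (zero_le (a := n))) ≫
            (vs n ≫ inv (qle n (Order.succ n) (Order.le_succ n))) =
          Balg.a ≫ (eqToHom h0.symm ≫ qle 0 n (zero_le (a := n))))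
        (walg : f ≫ (⟨eqToHom h0.symm ≫ qle 0 n (zero_le (a := n)), hmor⟩ :
              Balg ⟶ (⟨Q n, vs n ≫ inv (qle n (Order.succ n) (Order.le_succ n)),
                hunit, hassoc⟩ : T.Algebra)) =
          g ≫ ⟨eqToHom h0.symm ≫ qle 0 n (zero_le (a := n)), hmor⟩),
        Nonempty (IsColimit (Cofork.ofπ (f := f) (g := g)
          (⟨eqToHom h0.symm ≫ qle 0 n (zero_le (a := n)), hmor⟩ :
            Balg ⟶ (⟨Q n, vs n ≫ inv (qle n (Order.succ n) (Order.le_succ n)),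
              hunit, hassoc⟩ : T.Algebra)) walg)) := by
  obtain ⟨BA, b, hbu, hba⟩ := Balg
  change Q 0 = BA at h0
  subst h0
  have hN := natv T Q qle vs hrefl htrans hη hsucc hlimv
  have hlim : Order.IsSuccLimit κ.ord := Cardinal.isSuccLimit_ord hκ.aleph0_le
  -- cleaned-up base data
  have hw0' : f.f ≫ qle 0 (Order.succ 0) (Order.le_succ 0) =
      g.f ≫ qle 0 (Order.succ 0) (Order.le_succ 0) := by
    have h2 : f.f ≫ (𝟙 (Q 0) ≫ qle 0 (Order.succ 0) (Order.le_succ 0)) =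
        g.f ≫ (𝟙 (Q 0) ≫ qle 0 (Order.succ 0) (Order.le_succ 0)) := w0
    simpa using h2
  have hv0' : vs 0 = b ≫ qle 0 (Order.succ 0) (Order.le_succ 0) := by
    have h2 : vs 0 = 𝟙 (T.obj (Q 0)) ≫ b ≫ (𝟙 (Q 0) ≫ qle 0 (Order.succ 0) (Order.le_succ 0)) :=
      hv0
    simpa using h2
  have hcol0 : IsColimit (Cofork.ofπ (qle 0 (Order.succ 0) (Order.le_succ 0)) hw0') :=
    cofork_transport (by simp) hcoeq0.some
  -- the stabilisation stage
  obtain ⟨w, u0, hwleg, hunit0, hassoc0, hvu, hq0u, huq0⟩ :=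
    stage0 T Q qle vs hrefl htrans hη hsucc hlimv hlimvuniv hlimQ κ hκ hacc
  have hwq : w ≫ qle κ.ord (Order.succ κ.ord) (Order.le_succ _) = vs κ.ord := by
    rw [← hvu, Category.assoc, huq0, Category.comp_id]
  have hiso := propagate T Q qle vs hrefl htrans hη hsucc hlimv hlimvuniv hlimQ κ.ord hlim w
    hwleg hunit0 hassoc0 hwq
  have hn0n : κ.ord ≤ n := Cardinal.ord_le.mpr hn
  haveI hin : IsIso (qle κ.ord n hn0n) := hiso n hn0n
  haveI hin' : IsIso (qle κ.ord (Order.succ n) (hn0n.trans (Order.le_succ n))) :=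
    hiso (Order.succ n) (hn0n.trans (Order.le_succ n))
  haveI hqn : IsIso (qle n (Order.succ n) (Order.le_succ n)) := by
    have h2 : qle κ.ord n hn0n ≫ qle n (Order.succ n) (Order.le_succ n) =
        qle κ.ord (Order.succ n) (hn0n.trans (Order.le_succ n)) := htrans _ _ _ _ _
    haveI : IsIso (qle κ.ord n hn0n ≫ qle n (Order.succ n) (Order.le_succ n)) := by
      rw [h2]; infer_instance
    exact IsIso.of_isIso_comp_left (qle κ.ord n hn0n) (qle n (Order.succ n) (Order.le_succ n))
  -- the algebra structure on `Q n`
  have han : vs n ≫ inv (qle n (Order.succ n) (Order.le_succ n)) =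
      T.map (inv (qle κ.ord n hn0n)) ≫ w ≫ qle κ.ord n hn0n := by
    rw [IsIso.comp_inv_eq, Category.assoc, Category.assoc, htrans κ.ord n (Order.succ n),
      ← htrans κ.ord (Order.succ κ.ord) (Order.succ n) (Order.le_succ _) (succ_le_succ hn0n),
      ← Category.assoc w, hwq, ← hN n κ.ord hn0n, ← Category.assoc, ← Functor.map_comp,
      IsIso.inv_hom_id, CategoryTheory.Functor.map_id, Category.id_comp]
  have hunitp : T.η.app (Q n) ≫ (vs n ≫ inv (qle n (Order.succ n) (Order.le_succ n))) =
      𝟙 (Q n) := by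
    rw [han]
    have hη2 : T.η.app (Q n) ≫ T.map (inv (qle κ.ord n hn0n)) =
        inv (qle κ.ord n hn0n) ≫ T.η.app (Q κ.ord) := by
      have h2 := T.η.naturality (inv (qle κ.ord n hn0n))
      dsimp only [Functor.id_map] at h2
      exact h2.symm
    rw [← Category.assoc, hη2, Category.assoc, ← Category.assoc (T.η.app (Q κ.ord)), hunit0]
    simp
  have hμn : T.map (T.map (inv (qle κ.ord n hn0n))) ≫ T.μ.app (Q κ.ord) =
      T.μ.app (Q n) ≫ T.map (inv (qle κ.ord n hn0n)) := by
    have h2 := T.μ.naturality (inv (qle κ.ord n hn0n))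
    dsimp only [Functor.comp_map] at h2
    exact h2
  have hassocp : T.μ.app (Q n) ≫ (vs n ≫ inv (qle n (Order.succ n) (Order.le_succ n))) =
      T.map (vs n ≫ inv (qle n (Order.succ n) (Order.le_succ n))) ≫
        (vs n ≫ inv (qle n (Order.succ n) (Order.le_succ n))) := by
    rw [han]
    simp only [Functor.map_comp, Category.assoc]
    rw [← Category.assoc (T.map (qle κ.ord n hn0n)), ← Functor.map_comp, IsIso.hom_inv_id,
      CategoryTheory.Functor.map_id, Category.id_comp, ← Category.assoc, ← hμn, Category.assoc,
      ← Category.assoc (T.μ.app (Q κ.ord)), hassoc0]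
    simp only [Category.assoc]
  have h0n : (0 : Ordinal.{v}) < n := lt_of_lt_of_le hlim.pos hn0n
  have hmorp' : T.map (qle 0 n ((zero_le (a := n)))) ≫
      (vs n ≫ inv (qle n (Order.succ n) (Order.le_succ n))) = b ≫ qle 0 n ((zero_le (a := n))) := by
    rw [han, ← htrans 0 κ.ord n (zero_le) hn0n, Functor.map_comp]
    simp only [Category.assoc]
    rw [← Category.assoc (T.map (qle κ.ord n hn0n)), ← Functor.map_comp, IsIso.hom_inv_id,
      CategoryTheory.Functor.map_id, Category.id_comp, ← Category.assoc, hwleg 0 hlim.pos,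
      hv0', Category.assoc, Category.assoc, htrans, htrans, htrans]
  have hmorp : T.map (eqToHom (rfl : Q 0 = Q 0).symm ≫ qle 0 n ((zero_le (a := n)))) ≫
      (vs n ≫ inv (qle n (Order.succ n) (Order.le_succ n))) =
      b ≫ (eqToHom (rfl : Q 0 = Q 0).symm ≫ qle 0 n ((zero_le (a := n)))) := by
    simpa using hmorp'
  have hs0n : Order.succ (0 : Ordinal.{v}) ≤ n := Order.succ_le_of_lt h0n
  have hkey : ∀ k (hk : Order.succ k ≤ n), vs k ≫ qle (Order.succ k) n hk =
      T.map (qle k n ((Order.le_succ k).trans hk)) ≫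
        (vs n ≫ inv (qle n (Order.succ n) (Order.le_succ n))) := by
    intro k hk
    rw [← Category.assoc (T.map (qle k n ((Order.le_succ k).trans hk))), IsIso.eq_comp_inv,
      Category.assoc, htrans]
    exact (hN n k ((Order.le_succ k).trans hk)).symm
  refine ⟨hqn, hunitp, hassocp, hmorp, ?_, ⟨?_⟩⟩
  · refine Monad.Algebra.Hom.ext' _ _ _ _ ?_
    show f.f ≫ (𝟙 (Q 0) ≫ qle 0 n ((zero_le (a := n)))) =
      g.f ≫ (𝟙 (Q 0) ≫ qle 0 n ((zero_le (a := n))))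
    simp only [Category.id_comp]
    rw [← htrans 0 (Order.succ 0) n (Order.le_succ 0) hs0n, ← Category.assoc, hw0',
      Category.assoc]
  · refine Cofork.IsColimit.mk' _ (fun s => ?_)
    have hD := descend T Q qle vs hrefl htrans hη hsucc hlimv hlimvuniv
      hlimQ b hbu hv0' hcol0 s.pt.A s.pt.a s.pt.unit s.pt.assoc s.π.f
      (by exact congrArg Monad.Algebra.Hom.f s.condition) s.π.h
    set ufam := hD.choose with hufam
    have hu0 := hD.choose_spec.1
    have husucc := hD.choose_spec.2.1
    have hucoh := hD.choose_spec.2.2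
    rw [← hufam] at hu0 husucc hucoh
    have h3 : inv (qle n (Order.succ n) (Order.le_succ n)) ≫ ufam n = ufam (Order.succ n) := by
      rw [IsIso.inv_comp_eq]
      exact (hucoh n (Order.succ n) (Order.le_succ n)).symm
    have hdescmor : T.map (ufam n) ≫ s.pt.a =
        (vs n ≫ inv (qle n (Order.succ n) (Order.le_succ n))) ≫ ufam n := by
      rw [Category.assoc, h3, husucc n]
    have h4 : qle 0 n ((zero_le (a := n))) ≫ ufam n = s.π.f := by
      rw [hucoh 0 n ((zero_le (a := n))), hu0]
    refine ⟨⟨ufam n, hdescmor⟩, ?_, ?_⟩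
    · refine Monad.Algebra.Hom.ext' _ _ _ _ ?_
      show (eqToHom (rfl : Q 0 = Q 0).symm ≫ qle 0 n ((zero_le (a := n)))) ≫ ufam n = s.π.f
      simpa using h4
    · intro m' hm'
      refine Monad.Algebra.Hom.ext' _ _ _ _ ?_
      have h5 : (eqToHom (rfl : Q 0 = Q 0).symm ≫ qle 0 n ((zero_le (a := n)))) ≫ m'.f =
          s.π.f := by exact congrArg Monad.Algebra.Hom.f hm'
      have h5' : qle 0 n ((zero_le (a := n))) ≫ m'.f = s.π.f := by simpa using h5
      show m'.f = ufam n
      exact descuniq T Q qle vs hrefl htrans hη hsucc hlimv hlimvuniv hlimQ b hbu hv0' hcol0 n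
        (vs n ≫ inv (qle n (Order.succ n) (Order.le_succ n))) hkey s.pt.A s.pt.a m'.f (ufam n)
        m'.h hdescmor (by rw [h5', h4])

end Paper
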